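/- If a graph G is d-degenerate, then its correspondence packing number satisfies χ*_c(G) ≤ 2d; that is, for every 2d-correspondence assignment of G there exist 2d pairwise disjoint correspondence colorings. -/

import Mathlib

/-!
A `k`-correspondence assignment (`k`-cover) of `G` is a family of permutations
`σ u v h : Fin k ≃ Fin k`, one for each adjacent pair, which is consistent
(`σ v u = (σ u v).symm`).  A `(D,σ)`-coloring is `φ : V → Fin k` with
`σ u v h (φ u) ≠ φ v` for every edge; a packing is `k` such colorings that are
pairwise distinct at every vertex.  `G` is `d`-degenerate iff every nonempty
finite set of vertices contains a vertex with at most `d` neighbors in it.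
-/

theorem stmt17 {V : Type*} [Fintype V] [DecidableEq V]
    (G : SimpleGraph V) [DecidableRel G.Adj] (d : ℕ)
    (hdegen : ∀ S : Finset V, S.Nonempty → ∃ v ∈ S, (G.neighborFinset v ∩ S).card ≤ d)
    (σ : ∀ u v : V, G.Adj u v → (Fin (2 * d) ≃ Fin (2 * d)))
    (hσ : ∀ (u v : V) (h : G.Adj u v), σ v u h.symm = (σ u v h).symm) :
    ∃ φ : Fin (2 * d) → V → Fin (2 * d),
      (∀ (i : Fin (2 * d)) (u v : V) (h : G.Adj u v), σ u v h (φ i u) ≠ φ i v) ∧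
      (∀ v : V, Function.Injective fun i => φ i v) := by
  suffices h : ∀ S : Finset V, ∃ φ : Fin (2*d) → V → Fin (2*d),
      (∀ (i : Fin (2*d)) (u v : V) (h : G.Adj u v), u ∈ S → v ∈ S →
        σ u v h (φ i u) ≠ φ i v) ∧
      (∀ v ∈ S, Function.Injective fun i => φ i v) by
    obtain ⟨φ, h1, h2⟩ := h Finset.univ
    exact ⟨φ, fun i u v hadj => h1 i u v hadj (Finset.mem_univ _) (Finset.mem_univ _),
      fun v => h2 v (Finset.mem_univ _)⟩
  intro S
  induction S using Finset.strongInductionOn with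
  | _ S IH =>
    rcases S.eq_empty_or_nonempty with rfl | hS
    · exact ⟨fun i _ => i, by simp, by simp⟩
    obtain ⟨v, hvS, hvd⟩ := hdegen S hS
    obtain ⟨φ, hφ1, hφ2⟩ := IH (S.erase v) (Finset.erase_ssubset hvS)
    classical
    set N : Finset V := G.neighborFinset v ∩ S.erase v with hN
    have hNd : N.card ≤ d := by
      refine le_trans (Finset.card_le_card ?_) hvd
      intro u hu
      simp only [hN, Finset.mem_inter, Finset.mem_erase] at hu ⊢
      exact ⟨hu.1, hu.2.2⟩
    have hNadj : ∀ u ∈ N, G.Adj u v := by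
      intro u hu
      simp only [hN, Finset.mem_inter, SimpleGraph.mem_neighborFinset] at hu
      exact hu.1.symm
    have hNS : ∀ u ∈ N, u ∈ S.erase v := by
      intro u hu
      simp only [hN, Finset.mem_inter] at hu
      exact hu.2
    set σ' : V → Fin (2*d) → Fin (2*d) :=
      fun u c => if h : G.Adj u v then σ u v h c else c with hσ'
    have hσ'eq : ∀ (u : V) (h : G.Adj u v) (c : Fin (2*d)), σ' u c = σ u v h c := by
      intro u h c
      simp only [hσ', dif_pos h]
    have hσ'inj : ∀ u ∈ N, Function.Injective (σ' u) := by
      intro u hu a b hab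
      rw [hσ'eq u (hNadj u hu), hσ'eq u (hNadj u hu)] at hab
      exact (σ u v (hNadj u hu)).injective hab
    set forb : Fin (2*d) → Finset (Fin (2*d)) :=
      fun i => N.image (fun u => σ' u (φ i u)) with hforb
    set t : Fin (2*d) → Finset (Fin (2*d)) := fun i => Finset.univ \ forb i with ht
    have hforbcard : ∀ i, (forb i).card ≤ d :=
      fun i => le_trans Finset.card_image_le hNd
    have htcard : ∀ i, d ≤ (t i).card := by
      intro i
      have h1 : (t i).card = 2*d - (forb i).card := by
        rw [ht]
        rw [Finset.card_sdiff_of_subset (Finset.subset_univ _)]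
        simp
      have h2 := hforbcard i
      omega
    have hall : ∀ s : Finset (Fin (2*d)), s.card ≤ (s.biUnion t).card := by
      intro s
      by_cases hs : s.card ≤ d
      · rcases s.eq_empty_or_nonempty with rfl | ⟨i, hi⟩
        · simp
        · calc s.card ≤ d := hs
            _ ≤ (t i).card := htcard i
            _ ≤ (s.biUnion t).card :=
              Finset.card_le_card (Finset.subset_biUnion_of_mem t hi)
      · push_neg at hs
        have huniv : Finset.univ ⊆ s.biUnion t := by
          intro c _
          by_contra hc
          simp only [Finset.mem_biUnion, not_exists, not_and] at hc
          have hmem : ∀ i ∈ s, ∃ u ∈ N, σ' u (φ i u) = c := by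
            intro i hi
            have := hc i hi
            simp only [ht, Finset.mem_sdiff, Finset.mem_univ, true_and, not_not] at this
            simpa only [hforb, Finset.mem_image] using this
          have hcard : s.card ≤ N.card := by
            refine Finset.card_le_card_of_injOn
              (fun i => if h : i ∈ s then (hmem i h).choose else v) ?_ ?_
            · intro i hi
              simp only [Finset.mem_coe.mp hi, dif_pos, Finset.mem_coe]
              exact (hmem i hi).choose_spec.1
            · intro i hi j hj heq
              simp only [Finset.mem_coe] at hi hj
              simp only [hi, hj, dif_pos] at heq
              obtain ⟨hui, hci⟩ := (hmem i hi).choose_spec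
              obtain ⟨huj, hcj⟩ := (hmem j hj).choose_spec
              rw [← heq] at hcj
              have : σ' ((hmem i hi).choose) (φ i ((hmem i hi).choose))
                  = σ' ((hmem i hi).choose) (φ j ((hmem i hi).choose)) := by
                rw [hci, hcj]
              have hφeq := hσ'inj _ hui this
              exact hφ2 _ (hNS _ hui) hφeq
          omega
        calc s.card ≤ 2*d := by simpa using Finset.card_le_card (Finset.subset_univ s)
          _ = (Finset.univ : Finset (Fin (2*d))).card := by simp
          _ ≤ (s.biUnion t).card := Finset.card_le_card huniv
    obtain ⟨f, hf_inj, hf_mem⟩ :=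
      (Finset.all_card_le_biUnion_card_iff_exists_injective t).mp hall
    have hf_not : ∀ i, ∀ u ∈ N, σ' u (φ i u) ≠ f i := by
      intro i u hu heq
      have := hf_mem i
      simp only [ht, Finset.mem_sdiff, Finset.mem_univ, true_and] at this
      exact this (by
        simp only [hforb, Finset.mem_image]
        exact ⟨u, hu, heq⟩)
    refine ⟨fun i u => if u = v then f i else φ i u, ?_, ?_⟩
    · intro i u w hadj huS hwS
      by_cases hu : u = v <;> by_cases hw : w = v
      · rw [hu, hw] at hadj; exact (G.loopless.irrefl v hadj).elim
      · subst hu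
        simp only [if_pos rfl, eq_self_iff_true, if_true, if_neg hw]
        intro heq
        have hwN : w ∈ N := by
          simp only [hN, Finset.mem_inter, SimpleGraph.mem_neighborFinset,
            Finset.mem_erase]
          exact ⟨hadj, hw, hwS⟩
        apply hf_not i w hwN
        rw [hσ'eq w hadj.symm, hσ u w hadj, ← heq, Equiv.symm_apply_apply]
      · subst hw
        simp only [if_pos rfl, eq_self_iff_true, if_true, if_neg hu]
        intro heq
        have huN : u ∈ N := by
          simp only [hN, Finset.mem_inter, SimpleGraph.mem_neighborFinset,
            Finset.mem_erase]
          exact ⟨hadj.symm, hu, huS⟩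
        exact hf_not i u huN (by rw [hσ'eq u hadj]; exact heq)
      · simp only [if_neg hu, if_neg hw]
        exact hφ1 i u w hadj (Finset.mem_erase.mpr ⟨hu, huS⟩)
          (Finset.mem_erase.mpr ⟨hw, hwS⟩)
    · intro w hwS
      by_cases hw : w = v
      · subst hw
        intro i j hij
        simp only [if_pos rfl, eq_self_iff_true, if_true] at hij
        exact hf_inj hij
      · intro i j hij
        simp only [if_neg hw] at hij
        exact hφ2 w (Finset.mem_erase.mpr ⟨hw, hwS⟩) hij
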